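/- Let L be a labelling of the boundary cycle of a quadrangulated polygon by {1,2,3,4} identified with the corners (0,0),(1,0),(1,1),(0,1) of the unit square, such that no boundary edge has labels {1,3} or {2,4}. Then the induced piecewise-linear map from the boundary circle to the boundary of the unit square is well defined (misses the center), and its winding number around (1/2,1/2) equals deg([1,2],L) as defined by counting signed occurrences of consecutive pairs (1,2). -/

import Mathlib

/-- The corner of the unit square associated with a label in `{1,2,3,4}`
(encoded as `0,1,2,3 : Fin 4`): `1 ↦ (0,0)`, `2 ↦ (1,0)`, `3 ↦ (1,1)`,
`4 ↦ (0,1)`. -/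
def cornerOfLabel : Fin 4 → ℝ × ℝ
  | 0 => (0, 0)
  | 1 => (1, 0)
  | 2 => (1, 1)
  | 3 => (0, 1)

/-- The piecewise-linear boundary loop induced by a cyclic labelling
`L : ZMod m → Fin 4`: on `[k, k+1]` it joins `cornerOfLabel (L k)` to
`cornerOfLabel (L (k+1))` linearly. -/
noncomputable def boundaryLoop (m : ℕ) [NeZero m] (L : ZMod m → Fin 4) (t : ℝ) : ℝ × ℝ :=
  (1 - (t - ⌊t⌋)) • cornerOfLabel (L ((⌊t⌋ : ℤ) : ZMod m)) +
    (t - ⌊t⌋) • cornerOfLabel (L ((⌊t⌋ + 1 : ℤ) : ZMod m))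

/-- `deg([1,2],L)`: the number of cyclically consecutive pairs labelled
`(1,2)` minus the number labelled `(2,1)`. -/
def degOneTwo (m : ℕ) [NeZero m] (L : ZMod m → Fin 4) : ℤ :=
  ((Finset.univ.filter fun k : ZMod m => L k = 0 ∧ L (k + 1) = 1).card : ℤ) -
  ((Finset.univ.filter fun k : ZMod m => L k = 1 ∧ L (k + 1) = 0).card : ℤ)

namespace BWaux

open Real

/-- The linear segment from `cornerOfLabel a` to `cornerOfLabel b`. -/
noncomputable def bwSeg (a b : Fin 4) (s : ℝ) : ℝ × ℝ :=
  (1 - s) • cornerOfLabel a + s • cornerOfLabel b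

/-- Integer potential on labels with branch cut on the edge `0 → 1`. -/
def bwBeta (a : Fin 4) : ℤ := ((a.val + 3) % 4 : ℕ)

/-- Signed crossing indicator of the cut edge. -/
def bwEps (a b : Fin 4) : ℤ :=
  (if a = 0 ∧ b = 1 then 1 else 0) - (if a = 1 ∧ b = 0 then 1 else 0)

/-- The signed quarter-turn count along the directed edge `a → b`. -/
def bwStep (a b : Fin 4) : ℤ := bwBeta b - bwBeta a + 4 * bwEps a b

lemma sqrt_quarter (u : ℝ) : Real.sqrt ((u/2)^2 + (1/2)^2) = Real.sqrt (1+u^2)/2 := by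
  rw [show (u/2)^2 + (1/2:ℝ)^2 = (1+u^2) * (1/2)^2 by ring,
    Real.sqrt_mul (by positivity) ((1/2:ℝ)^2), Real.sqrt_sq (by norm_num : (0:ℝ) ≤ 1/2)]
  ring

lemma mul_cos_arctan (u : ℝ) : Real.sqrt (1+u^2)/2 * Real.cos (Real.arctan u) = 1/2 := by
  rw [Real.cos_arctan]
  have h : Real.sqrt (1+u^2) ≠ 0 := by positivity
  field_simp

lemma mul_sin_arctan (u : ℝ) : Real.sqrt (1+u^2)/2 * Real.sin (Real.arctan u) = u/2 := by
  rw [Real.sin_arctan]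
  have h : Real.sqrt (1+u^2) ≠ 0 := by positivity
  field_simp

lemma bottom_rep (x : ℝ) :
    (x - 1/2 = Real.sqrt ((x - 1/2)^2 + ((0:ℝ) - 1/2)^2) * Real.cos (Real.arctan (2*x-1) - π/2)) ∧
    ((0:ℝ) - 1/2 = Real.sqrt ((x - 1/2)^2 + ((0:ℝ) - 1/2)^2) * Real.sin (Real.arctan (2*x-1) - π/2)) := by
  have hR : Real.sqrt ((x - 1/2)^2 + ((0:ℝ) - 1/2)^2) = Real.sqrt (1+(2*x-1)^2)/2 := by
    rw [show (x - 1/2)^2 + ((0:ℝ) - 1/2)^2 = ((2*x-1)/2)^2 + (1/2)^2 by ring]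
    exact sqrt_quarter _
  constructor
  · rw [hR, Real.cos_sub_pi_div_two, mul_sin_arctan]; ring
  · rw [hR, Real.sin_sub_pi_div_two, mul_neg, mul_cos_arctan]; norm_num

lemma right_rep (y : ℝ) :
    ((1:ℝ) - 1/2 = Real.sqrt (((1:ℝ) - 1/2)^2 + (y - 1/2)^2) * Real.cos (Real.arctan (2*y-1))) ∧
    (y - 1/2 = Real.sqrt (((1:ℝ) - 1/2)^2 + (y - 1/2)^2) * Real.sin (Real.arctan (2*y-1))) := by
  have hR : Real.sqrt (((1:ℝ) - 1/2)^2 + (y - 1/2)^2) = Real.sqrt (1+(2*y-1)^2)/2 := by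
    rw [show ((1:ℝ) - 1/2)^2 + (y - 1/2)^2 = ((2*y-1)/2)^2 + (1/2)^2 by ring]
    exact sqrt_quarter _
  constructor
  · rw [hR, mul_cos_arctan]; norm_num
  · rw [hR, mul_sin_arctan]; ring

lemma top_rep (x : ℝ) :
    (x - 1/2 = Real.sqrt ((x - 1/2)^2 + ((1:ℝ) - 1/2)^2) * Real.cos (π/2 - Real.arctan (2*x-1))) ∧
    ((1:ℝ) - 1/2 = Real.sqrt ((x - 1/2)^2 + ((1:ℝ) - 1/2)^2) * Real.sin (π/2 - Real.arctan (2*x-1))) := by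
  have hR : Real.sqrt ((x - 1/2)^2 + ((1:ℝ) - 1/2)^2) = Real.sqrt (1+(2*x-1)^2)/2 := by
    rw [show (x - 1/2)^2 + ((1:ℝ) - 1/2)^2 = ((2*x-1)/2)^2 + (1/2)^2 by ring]
    exact sqrt_quarter _
  constructor
  · rw [hR, Real.cos_pi_div_two_sub, mul_sin_arctan]; ring
  · rw [hR, Real.sin_pi_div_two_sub, mul_cos_arctan]; norm_num

lemma left_rep (y : ℝ) :
    ((0:ℝ) - 1/2 = Real.sqrt (((0:ℝ) - 1/2)^2 + (y - 1/2)^2) * Real.cos (π - Real.arctan (2*y-1))) ∧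
    (y - 1/2 = Real.sqrt (((0:ℝ) - 1/2)^2 + (y - 1/2)^2) * Real.sin (π - Real.arctan (2*y-1))) := by
  have hR : Real.sqrt (((0:ℝ) - 1/2)^2 + (y - 1/2)^2) = Real.sqrt (1+(2*y-1)^2)/2 := by
    rw [show ((0:ℝ) - 1/2)^2 + (y - 1/2)^2 = ((2*y-1)/2)^2 + (1/2)^2 by ring]
    exact sqrt_quarter _
  constructor
  · rw [hR, Real.cos_pi_sub, mul_neg, mul_cos_arctan]; norm_num
  · rw [hR, Real.sin_pi_sub, mul_sin_arctan]; ring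

lemma rep_of_components {v : ℝ × ℝ} {R ψ : ℝ}
    (h1 : v.1 - 1/2 = R * Real.cos ψ) (h2 : v.2 - 1/2 = R * Real.sin ψ) :
    v - ((1/2:ℝ), (1/2:ℝ)) = R • (Real.cos ψ, Real.sin ψ) := by
  have hv : v - ((1/2:ℝ), (1/2:ℝ)) = (v.1 - 1/2, v.2 - 1/2) := rfl
  rw [hv, h1, h2]
  rfl

lemma contA : Continuous fun s : ℝ => Real.arctan (2*s-1) :=
  Real.continuous_arctan.comp (by fun_prop)

lemma contB : Continuous fun s : ℝ => Real.arctan (2*(1-s)-1) :=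
  Real.continuous_arctan.comp (by fun_prop)

lemma arct_a : Real.arctan (2*(1:ℝ)-1) = π/4 := by norm_num [Real.arctan_one]

lemma arct_b : Real.arctan (2*(0:ℝ)-1) = -(π/4) := by
  rw [show (2*(0:ℝ)-1) = -1 by norm_num, show (-1:ℝ) = -(1:ℝ) by norm_num,
    Real.arctan_neg, Real.arctan_one]

lemma arct_c : Real.arctan (2*(1-(1:ℝ))-1) = -(π/4) := by
  rw [show (2*(1-(1:ℝ))-1) = -1 by norm_num, show (-1:ℝ) = -(1:ℝ) by norm_num,
    Real.arctan_neg, Real.arctan_one]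

lemma arct_d : Real.arctan (2*(1-(0:ℝ))-1) = π/4 := by norm_num [Real.arctan_one]

lemma case_helper {a b : Fin 4} (x y ψ : ℝ → ℝ) (hψ : Continuous ψ)
    (hz : ∀ s, bwSeg a b s = (x s, y s))
    (hnc : ∀ s, (x s, y s) ≠ ((1/2 : ℝ), (1/2 : ℝ)))
    (h1 : ∀ s, x s - 1/2 = Real.sqrt ((x s - 1/2)^2 + (y s - 1/2)^2) * Real.cos (ψ s))
    (h2 : ∀ s, y s - 1/2 = Real.sqrt ((x s - 1/2)^2 + (y s - 1/2)^2) * Real.sin (ψ s))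
    (hd : ψ 1 - ψ 0 = (bwStep a b : ℝ) * (π/2)) :
    ∃ ψ : ℝ → ℝ, Continuous ψ ∧
      (∀ s : ℝ, bwSeg a b s ≠ ((1/2:ℝ), (1/2:ℝ)) ∧
        bwSeg a b s - ((1/2:ℝ), (1/2:ℝ)) =
          Real.sqrt (((bwSeg a b s).1 - 1/2)^2 + ((bwSeg a b s).2 - 1/2)^2) •
            (Real.cos (ψ s), Real.sin (ψ s))) ∧
      ψ 1 - ψ 0 = (bwStep a b : ℝ) * (π/2) := by
  refine ⟨ψ, hψ, fun s => ?_, hd⟩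
  rw [hz s]
  exact ⟨hnc s, rep_of_components (h1 s) (h2 s)⟩

lemma edge_data (a b : Fin 4)
    (hab : ¬((a = 0 ∧ b = 2) ∨ (a = 2 ∧ b = 0) ∨ (a = 1 ∧ b = 3) ∨ (a = 3 ∧ b = 1))) :
    ∃ ψ : ℝ → ℝ, Continuous ψ ∧
      (∀ s : ℝ, bwSeg a b s ≠ ((1/2:ℝ), (1/2:ℝ)) ∧
        bwSeg a b s - ((1/2:ℝ), (1/2:ℝ)) =
          Real.sqrt (((bwSeg a b s).1 - 1/2)^2 + ((bwSeg a b s).2 - 1/2)^2) •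
            (Real.cos (ψ s), Real.sin (ψ s))) ∧
      ψ 1 - ψ 0 = (bwStep a b : ℝ) * (π/2) := by
  have hfin : ∀ x : Fin 4, x = 0 ∨ x = 1 ∨ x = 2 ∨ x = 3 := by decide
  have hseg : ∀ (a b : Fin 4) (s : ℝ), bwSeg a b s =
      ((1-s) * (cornerOfLabel a).1 + s * (cornerOfLabel b).1,
       (1-s) * (cornerOfLabel a).2 + s * (cornerOfLabel b).2) := fun _ _ _ => rfl
  rcases hfin a with rfl | rfl | rfl | rfl <;> rcases hfin b with rfl | rfl | rfl | rfl
  -- (0,0)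
  · refine case_helper (fun _ => 0) (fun _ => 0) (fun _ => Real.arctan (2*(0:ℝ)-1) - π/2)
      continuous_const (fun s => by rw [hseg]; norm_num [cornerOfLabel])
      (fun s => by norm_num [Prod.ext_iff])
      (fun s => (bottom_rep 0).1) (fun s => (bottom_rep 0).2) ?_
    norm_num [show bwStep 0 0 = 0 from by decide]
  -- (0,1)
  · refine case_helper (fun s => s) (fun _ => 0) (fun s => Real.arctan (2*s-1) - π/2)
      (contA.sub continuous_const) (fun s => by rw [hseg]; norm_num [cornerOfLabel])
      (fun s => by norm_num [Prod.ext_iff])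
      (fun s => (bottom_rep s).1) (fun s => (bottom_rep s).2) ?_
    simp only [arct_a, arct_b, show bwStep 0 1 = 1 from by decide]
    push_cast; ring
  -- (0,2) forbidden
  · exact absurd (Or.inl ⟨rfl, rfl⟩) hab
  -- (0,3)
  · refine case_helper (fun _ => 0) (fun s => s) (fun s => π - Real.arctan (2*s-1))
      (continuous_const.sub contA) (fun s => by rw [hseg]; norm_num [cornerOfLabel])
      (fun s => by norm_num [Prod.ext_iff])
      (fun s => (left_rep s).1) (fun s => (left_rep s).2) ?_
    simp only [arct_a, arct_b, show bwStep 0 3 = -1 from by decide]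
    push_cast; ring
  -- (1,0)
  · refine case_helper (fun s => 1 - s) (fun _ => 0) (fun s => Real.arctan (2*(1-s)-1) - π/2)
      (contB.sub continuous_const) (fun s => by rw [hseg]; norm_num [cornerOfLabel])
      (fun s => by norm_num [Prod.ext_iff])
      (fun s => (bottom_rep (1-s)).1) (fun s => (bottom_rep (1-s)).2) ?_
    simp only [arct_c, arct_d, show bwStep 1 0 = -1 from by decide]
    push_cast; ring
  -- (1,1)
  · refine case_helper (fun _ => 1) (fun _ => 0) (fun _ => Real.arctan (2*(1:ℝ)-1) - π/2)
      continuous_const (fun s => by rw [hseg]; norm_num [cornerOfLabel])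
      (fun s => by norm_num [Prod.ext_iff])
      (fun s => (bottom_rep 1).1) (fun s => (bottom_rep 1).2) ?_
    norm_num [show bwStep 1 1 = 0 from by decide]
  -- (1,2)
  · refine case_helper (fun _ => 1) (fun s => s) (fun s => Real.arctan (2*s-1))
      contA (fun s => by rw [hseg]; norm_num [cornerOfLabel])
      (fun s => by norm_num [Prod.ext_iff])
      (fun s => (right_rep s).1) (fun s => (right_rep s).2) ?_
    simp only [arct_a, arct_b, show bwStep 1 2 = 1 from by decide]
    push_cast; ring
  -- (1,3) forbidden
  · exact absurd (Or.inr (Or.inr (Or.inl ⟨rfl, rfl⟩))) hab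
  -- (2,0) forbidden
  · exact absurd (Or.inr (Or.inl ⟨rfl, rfl⟩)) hab
  -- (2,1)
  · refine case_helper (fun _ => 1) (fun s => 1 - s) (fun s => Real.arctan (2*(1-s)-1))
      contB (fun s => by rw [hseg]; norm_num [cornerOfLabel])
      (fun s => by norm_num [Prod.ext_iff])
      (fun s => (right_rep (1-s)).1) (fun s => (right_rep (1-s)).2) ?_
    simp only [arct_c, arct_d, show bwStep 2 1 = -1 from by decide]
    push_cast; ring
  -- (2,2)
  · refine case_helper (fun _ => 1) (fun _ => 1) (fun _ => Real.arctan (2*(1:ℝ)-1))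
      continuous_const (fun s => by rw [hseg]; norm_num [cornerOfLabel])
      (fun s => by norm_num [Prod.ext_iff])
      (fun s => (right_rep 1).1) (fun s => (right_rep 1).2) ?_
    norm_num [show bwStep 2 2 = 0 from by decide]
  -- (2,3)
  · refine case_helper (fun s => 1 - s) (fun _ => 1) (fun s => π/2 - Real.arctan (2*(1-s)-1))
      (continuous_const.sub contB) (fun s => by rw [hseg]; norm_num [cornerOfLabel])
      (fun s => by norm_num [Prod.ext_iff])
      (fun s => (top_rep (1-s)).1) (fun s => (top_rep (1-s)).2) ?_
    simp only [arct_c, arct_d, show bwStep 2 3 = 1 from by decide]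
    push_cast; ring
  -- (3,0)
  · refine case_helper (fun _ => 0) (fun s => 1 - s) (fun s => π - Real.arctan (2*(1-s)-1))
      (continuous_const.sub contB) (fun s => by rw [hseg]; norm_num [cornerOfLabel])
      (fun s => by norm_num [Prod.ext_iff])
      (fun s => (left_rep (1-s)).1) (fun s => (left_rep (1-s)).2) ?_
    simp only [arct_c, arct_d, show bwStep 3 0 = 1 from by decide]
    push_cast; ring
  -- (3,1) forbidden
  · exact absurd (Or.inr (Or.inr (Or.inr ⟨rfl, rfl⟩))) hab
  -- (3,2)
  · refine case_helper (fun s => s) (fun _ => 1) (fun s => π/2 - Real.arctan (2*s-1))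
      (continuous_const.sub contA) (fun s => by rw [hseg]; norm_num [cornerOfLabel])
      (fun s => by norm_num [Prod.ext_iff])
      (fun s => (top_rep s).1) (fun s => (top_rep s).2) ?_
    simp only [arct_a, arct_b, show bwStep 3 2 = -1 from by decide]
    push_cast; ring
  -- (3,3)
  · refine case_helper (fun _ => 0) (fun _ => 1) (fun _ => π - Real.arctan (2*(1:ℝ)-1))
      continuous_const (fun s => by rw [hseg]; norm_num [cornerOfLabel])
      (fun s => by norm_num [Prod.ext_iff])
      (fun s => (left_rep 1).1) (fun s => (left_rep 1).2) ?_
    norm_num [show bwStep 3 3 = 0 from by decide]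

lemma loop_eq_seg (m : ℕ) [NeZero m] (L : ZMod m → Fin 4) (k : ℤ) (t : ℝ)
    (h1 : (k:ℝ) ≤ t) (h2 : t ≤ (k:ℝ)+1) :
    boundaryLoop m L t = bwSeg (L (k : ZMod m)) (L ((k : ZMod m)+1)) (t - k) := by
  rcases lt_or_eq_of_le h2 with hlt | heq
  · have hf : ⌊t⌋ = k := Int.floor_eq_iff.mpr ⟨h1, by push_cast; linarith⟩
    unfold boundaryLoop bwSeg
    rw [hf]
    push_cast
    rfl
  · subst heq
    have hf : ⌊(k:ℝ) + 1⌋ = k + 1 := by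
      rw [show ((k:ℝ)+1) = ((k+1:ℤ):ℝ) by push_cast; ring]
      exact Int.floor_intCast _
    unfold boundaryLoop bwSeg
    rw [hf]
    push_cast
    simp

lemma lift_eq {x y : ℝ} (hxy : x ≤ y) {θ ψ : ℝ → ℝ} (hθ : Continuous θ) (hψ : Continuous ψ)
    (h : ∀ t ∈ Set.Icc x y, Real.cos (θ t) = Real.cos (ψ t) ∧ Real.sin (θ t) = Real.sin (ψ t)) :
    θ y - θ x = ψ y - ψ x := by
  have key : ∀ t ∈ Set.Icc x y, ∃ n : ℤ, θ t - ψ t = 2 * π * n := fun t ht =>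
    Real.Angle.angle_eq_iff_two_pi_dvd_sub.mp (Real.Angle.cos_sin_inj (h t ht).1 (h t ht).2)
  obtain ⟨n, hn⟩ := key x ⟨le_refl x, hxy⟩
  obtain ⟨p, hp⟩ := key y ⟨hxy, le_refl y⟩
  have hg : ContinuousOn (fun t => θ t - ψ t) (Set.Icc x y) := (hθ.sub hψ).continuousOn
  have hπ : (π:ℝ) ≠ 0 := Real.pi_ne_zero
  have hnp : n = p := by
    by_contra hne
    rcases lt_or_gt_of_ne hne with hlt | hlt
    · have hmono : (n:ℝ) + 1 ≤ p := by exact_mod_cast hlt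
      have hmem : (2*π*n + π) ∈ Set.Icc ((fun t => θ t - ψ t) x) ((fun t => θ t - ψ t) y) := by
        constructor
        · show θ x - ψ x ≤ _; rw [hn]; nlinarith [Real.pi_pos]
        · show _ ≤ θ y - ψ y; rw [hp]; nlinarith [Real.pi_pos]
      obtain ⟨t, ht, hgt⟩ := intermediate_value_Icc hxy hg hmem
      obtain ⟨q, hq⟩ := key t ht
      have heq : 2*π*(q:ℝ) = 2*π*n + π := by rw [← hq]; exact hgt
      have h2 : (2*(q:ℝ)) * π = (2*(n:ℝ)+1) * π := by linear_combination heq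
      have h3 : 2*(q:ℝ) = 2*(n:ℝ)+1 := mul_right_cancel₀ hπ h2
      have h4 : (2*q : ℤ) = 2*n+1 := by exact_mod_cast h3
      omega
    · have hmono : (p:ℝ) + 1 ≤ n := by exact_mod_cast hlt
      have hmem : (2*π*p + π) ∈ Set.Icc ((fun t => θ t - ψ t) y) ((fun t => θ t - ψ t) x) := by
        constructor
        · show θ y - ψ y ≤ _; rw [hp]; nlinarith [Real.pi_pos]
        · show _ ≤ θ x - ψ x; rw [hn]; nlinarith [Real.pi_pos]
      obtain ⟨t, ht, hgt⟩ := intermediate_value_Icc' hxy hg hmem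
      obtain ⟨q, hq⟩ := key t ht
      have heq : 2*π*(q:ℝ) = 2*π*p + π := by rw [← hq]; exact hgt
      have h2 : (2*(q:ℝ)) * π = (2*(p:ℝ)+1) * π := by linear_combination heq
      have h3 : 2*(q:ℝ) = 2*(p:ℝ)+1 := mul_right_cancel₀ hπ h2
      have h4 : (2*q : ℤ) = 2*p+1 := by exact_mod_cast h3
      omega
  subst hnp
  have : θ y - ψ y = θ x - ψ x := by rw [hn, hp]
  linarith

lemma segment_step (m : ℕ) [NeZero m] (L : ZMod m → Fin 4)
    (hdiag : ∀ k : ZMod m,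
      ¬((L k = 0 ∧ L (k + 1) = 2) ∨ (L k = 2 ∧ L (k + 1) = 0) ∨
        (L k = 1 ∧ L (k + 1) = 3) ∨ (L k = 3 ∧ L (k + 1) = 1)))
    (θ : ℝ → ℝ) (hθ : Continuous θ)
    (hrep : ∀ t : ℝ, boundaryLoop m L t - (1 / 2, 1 / 2) =
        (Real.sqrt (((boundaryLoop m L t).1 - 1 / 2) ^ 2 +
            ((boundaryLoop m L t).2 - 1 / 2) ^ 2)) •
          (Real.cos (θ t), Real.sin (θ t)))
    (k : ℤ) :
    θ ((k:ℝ)+1) - θ (k:ℝ) = (bwStep (L (k:ZMod m)) (L ((k:ZMod m)+1)) : ℝ) * (π/2) := by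
  obtain ⟨ψ, hψc, hψ, hΔ⟩ := edge_data (L (k:ZMod m)) (L ((k:ZMod m)+1)) (hdiag (k:ZMod m))
  have hlift : θ ((k:ℝ)+1) - θ (k:ℝ) =
      (fun t => ψ (t - k)) ((k:ℝ)+1) - (fun t => ψ (t - k)) (k:ℝ) := by
    apply lift_eq (by linarith : (k:ℝ) ≤ (k:ℝ)+1) hθ
      (hψc.comp (continuous_id.sub continuous_const))
    intro t ht
    have hls := loop_eq_seg m L k t ht.1 ht.2
    have h1 := hrep t
    rw [hls] at h1
    have h2 := (hψ (t - k)).2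
    have hne := (hψ (t - k)).1
    set z := bwSeg (L (k:ZMod m)) (L ((k:ZMod m)+1)) (t - k) with hz
    have hRpos : 0 < Real.sqrt ((z.1 - 1/2)^2 + (z.2 - 1/2)^2) := by
      apply Real.sqrt_pos.mpr
      have hd : z.1 - 1/2 ≠ 0 ∨ z.2 - 1/2 ≠ 0 := by
        by_contra hcon
        push_neg at hcon
        apply hne
        have e1 : z.1 = 1/2 := by linarith [hcon.1, sub_eq_zero.mp hcon.1]
        have e2 : z.2 = 1/2 := by linarith [sub_eq_zero.mp hcon.2]
        exact Prod.ext e1 e2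
      rcases hd with hd | hd
      · have := pow_two_pos_of_ne_zero hd
        nlinarith [sq_nonneg (z.2 - 1/2)]
      · have := pow_two_pos_of_ne_zero hd
        nlinarith [sq_nonneg (z.1 - 1/2)]
    have hv : (Real.cos (θ t), Real.sin (θ t)) = (Real.cos (ψ (t-k)), Real.sin (ψ (t-k))) := by
      have hcomb := h1.symm.trans h2
      exact smul_right_injective (ℝ × ℝ) (ne_of_gt hRpos) hcomb
    rw [Prod.mk.injEq] at hv
    exact ⟨hv.1, hv.2⟩
  rw [hlift]
  simp only []
  rw [show ((k:ℝ)+1) - (k:ℝ) = 1 by ring, show (k:ℝ) - (k:ℝ) = 0 by ring]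
  exact hΔ

lemma sum_range_zmod (m : ℕ) [NeZero m] (F : ZMod m → ℤ) :
    ∑ i ∈ Finset.range m, F ((i : ℕ) : ZMod m) = ∑ j : ZMod m, F j := by
  apply Finset.sum_nbij' (fun i => ((i : ℕ) : ZMod m)) (fun j => j.val)
  · intro a _; exact Finset.mem_univ _
  · intro a _; exact Finset.mem_range.mpr (ZMod.val_lt a)
  · intro a ha; exact ZMod.val_cast_of_lt (Finset.mem_range.mp ha)
  · intro a _; rw [ZMod.natCast_val, ZMod.cast_id]
  · intro a _; rfl

lemma sum_eps (m : ℕ) [NeZero m] (L : ZMod m → Fin 4) :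
    ∑ j : ZMod m, bwEps (L j) (L (j+1)) = degOneTwo m L := by
  unfold bwEps degOneTwo
  rw [Finset.sum_sub_distrib]
  congr 1
  · exact Finset.sum_boole _ _
  · exact Finset.sum_boole _ _

lemma sum_bwStep_eq (m : ℕ) [NeZero m] (L : ZMod m → Fin 4) :
    ∑ i ∈ Finset.range m, bwStep (L ((i:ℕ) : ZMod m)) (L (((i:ℕ) : ZMod m)+1)) =
      4 * degOneTwo m L := by
  have expand : ∀ i ∈ Finset.range m,
      bwStep (L ((i:ℕ) : ZMod m)) (L (((i:ℕ) : ZMod m)+1)) =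
        (bwBeta (L (((i:ℕ) : ZMod m)+1)) - bwBeta (L ((i:ℕ) : ZMod m))) +
          4 * bwEps (L ((i:ℕ) : ZMod m)) (L (((i:ℕ) : ZMod m)+1)) := fun i _ => rfl
  rw [Finset.sum_congr rfl expand, Finset.sum_add_distrib]
  have h1 : ∑ i ∈ Finset.range m,
      (bwBeta (L (((i:ℕ) : ZMod m)+1)) - bwBeta (L ((i:ℕ) : ZMod m))) = 0 := by
    have htel := Finset.sum_range_sub (fun i : ℕ => bwBeta (L ((i:ℕ) : ZMod m))) m
    push_cast at htel
    rw [htel, ZMod.natCast_self]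
    simp
  have h2 : ∑ i ∈ Finset.range m, bwEps (L ((i:ℕ) : ZMod m)) (L (((i:ℕ) : ZMod m)+1)) =
      degOneTwo m L := by
    rw [sum_range_zmod m (fun j => bwEps (L j) (L (j+1)))]
    exact sum_eps m L
  rw [h1, ← Finset.mul_sum, h2]
  ring

end BWaux

open BWaux Real in
/-- For a boundary labelling by `{1,2,3,4}` with no edge labelled `{1,3}` or
`{2,4}`, the induced piecewise-linear loop on the boundary of the unit square
misses the center `(1/2,1/2)`, and its winding number around the center
(computed from any continuous angular lift `θ`) equals `deg([1,2],L)`. -/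
theorem boundary_winding_eq_deg (m : ℕ) [NeZero m] (L : ZMod m → Fin 4)
    (hdiag : ∀ k : ZMod m,
      ¬((L k = 0 ∧ L (k + 1) = 2) ∨ (L k = 2 ∧ L (k + 1) = 0) ∨
        (L k = 1 ∧ L (k + 1) = 3) ∨ (L k = 3 ∧ L (k + 1) = 1))) :
    (∀ t : ℝ, boundaryLoop m L t ≠ (1 / 2, 1 / 2)) ∧
    (∀ θ : ℝ → ℝ, Continuous θ →
      (∀ t : ℝ, boundaryLoop m L t - (1 / 2, 1 / 2) =
        (Real.sqrt (((boundaryLoop m L t).1 - 1 / 2) ^ 2 +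
            ((boundaryLoop m L t).2 - 1 / 2) ^ 2)) •
          (Real.cos (θ t), Real.sin (θ t))) →
      θ m - θ 0 = 2 * Real.pi * degOneTwo m L) := by
  constructor
  · intro t
    have h1 := Int.floor_le t
    have h2 := (Int.lt_floor_add_one t).le
    rw [loop_eq_seg m L ⌊t⌋ t h1 (by linarith)]
    obtain ⟨ψ, _, hψ, _⟩ := edge_data (L (⌊t⌋ : ZMod m)) (L ((⌊t⌋ : ZMod m)+1)) (hdiag _)
    exact (hψ (t - ⌊t⌋)).1
  · intro θ hθ hrep
    have hstep : ∀ i : ℕ, θ ((i:ℝ)+1) - θ (i:ℝ) =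
        (bwStep (L ((i:ℕ):ZMod m)) (L (((i:ℕ):ZMod m)+1)) : ℝ) * (π/2) := by
      intro i
      have h := segment_step m L hdiag θ hθ hrep (i : ℤ)
      push_cast at h
      exact h
    have tel : θ (m:ℝ) - θ 0 = ∑ i ∈ Finset.range m, (θ ((i:ℝ)+1) - θ (i:ℝ)) := by
      have h := Finset.sum_range_sub (fun i : ℕ => θ (i:ℝ)) m
      push_cast at h
      exact h.symm
    calc θ (m:ℝ) - θ 0 = ∑ i ∈ Finset.range m, (θ ((i:ℝ)+1) - θ (i:ℝ)) := tel
      _ = ∑ i ∈ Finset.range m,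
            (bwStep (L ((i:ℕ):ZMod m)) (L (((i:ℕ):ZMod m)+1)) : ℝ) * (π/2) :=
          Finset.sum_congr rfl (fun i _ => hstep i)
      _ = ((∑ i ∈ Finset.range m,
            bwStep (L ((i:ℕ):ZMod m)) (L (((i:ℕ):ZMod m)+1)) : ℤ) : ℝ) * (π/2) := by
          rw [← Finset.sum_mul]
          norm_cast
      _ = ((4 * degOneTwo m L : ℤ) : ℝ) * (π/2) := by rw [sum_bwStep_eq]
      _ = 2 * Real.pi * degOneTwo m L := by push_cast; ring
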